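/- Let G be a group acting geometrically on a metric space X such that for some point O the orbit map is a quasi-isometry, and let h ∈ G be an infinite-order element whose centraliser C_G(h) contains a finite-index subgroup isomorphic to F_n × ℤ (free group times ℤ) with ⟨h⟩ commensurable to the ℤ factor. If every element of G is virtually central (centraliser of finite index) and G is torsion-free, then G is isomorphic to ℤ or ℤ². -/

import Mathlib

set_option maxHeartbeats 1000000
open scoped commutatorElement



private lemma aux_comm_left {G : Type*} [Group G] (a b z : G) (hz : z ∈ Subgroup.center G) :
    ⁅a * z, b⁆ = ⁅a, b⁆ := by
  have hzb : z * b = b * z := (Subgroup.mem_center_iff.mp hz b).symm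
  calc ⁅a * z, b⁆ = a * (z * b) * z⁻¹ * a⁻¹ * b⁻¹ := by
        rw [commutatorElement_def]; group
    _ = a * (b * z) * z⁻¹ * a⁻¹ * b⁻¹ := by rw [hzb]
    _ = ⁅a, b⁆ := by rw [commutatorElement_def]; group

private lemma aux_comm_right {G : Type*} [Group G] (a b z : G) (hz : z ∈ Subgroup.center G) :
    ⁅a, b * z⁆ = ⁅a, b⁆ := by
  have hza : z * a⁻¹ = a⁻¹ * z := (Subgroup.mem_center_iff.mp hz a⁻¹).symm
  calc ⁅a, b * z⁆ = a * b * (z * a⁻¹) * z⁻¹ * b⁻¹ := by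
        rw [commutatorElement_def]; group
    _ = a * b * (a⁻¹ * z) * z⁻¹ * b⁻¹ := by rw [hza]
    _ = ⁅a, b⁆ := by rw [commutatorElement_def]; group

private lemma aux_finite_commutatorSet {G : Type*} [Group G]
    [(Subgroup.center G).FiniteIndex] : Finite (commutatorSet G) := by
  set Z := Subgroup.center G
  haveI : Finite (G ⧸ Z) := Z.finite_quotient_of_finiteIndex
  have hsub : commutatorSet G ⊆
      Set.range (fun p : (G ⧸ Z) × (G ⧸ Z) => ⁅Quotient.out p.1, Quotient.out p.2⁆) := by
    rintro g ⟨a, b, rfl⟩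
    refine ⟨(QuotientGroup.mk a, QuotientGroup.mk b), ?_⟩
    have ha : a = Quotient.out (QuotientGroup.mk a : G ⧸ Z) *
        ((Quotient.out (QuotientGroup.mk a : G ⧸ Z))⁻¹ * a) := by group
    have hb : b = Quotient.out (QuotientGroup.mk b : G ⧸ Z) *
        ((Quotient.out (QuotientGroup.mk b : G ⧸ Z))⁻¹ * b) := by group
    have hma : (Quotient.out (QuotientGroup.mk a : G ⧸ Z))⁻¹ * a ∈ Z := by
      rw [← QuotientGroup.eq]
      simp [QuotientGroup.out_eq']
    have hmb : (Quotient.out (QuotientGroup.mk b : G ⧸ Z))⁻¹ * b ∈ Z := by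
      rw [← QuotientGroup.eq]
      simp [QuotientGroup.out_eq']
    conv_rhs => rw [ha, hb]
    rw [aux_comm_left _ _ _ hma, aux_comm_right _ _ _ hmb]
  exact (Set.finite_range _).subset hsub |>.to_subtype

private lemma aux_fg_of_finiteIndex {G : Type*} [Group G] (K : Subgroup G) [K.FiniteIndex]
    (hK : Group.FG K) : Group.FG G := by
  classical
  haveI : Finite (G ⧸ K) := K.finite_quotient_of_finiteIndex
  obtain ⟨S, hScl⟩ := (Subgroup.fg_iff K).mp ((Group.fg_iff_subgroup_fg K).mp hK)
  set T : Set G := Set.range (fun q : G ⧸ K => Quotient.out q) with hT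
  refine Group.fg_iff.mpr ⟨S ∪ T, ?_, hScl.2.union (Set.finite_range _)⟩
  rw [eq_top_iff]
  intro g _
  have hKle : K ≤ Subgroup.closure (S ∪ T) := by
    rw [← hScl.1]
    exact Subgroup.closure_mono Set.subset_union_left
  have ht : Quotient.out (QuotientGroup.mk g : G ⧸ K) ∈ Subgroup.closure (S ∪ T) :=
    Subgroup.subset_closure (Set.mem_union_right _ ⟨QuotientGroup.mk g, rfl⟩)
  have hk : (Quotient.out (QuotientGroup.mk g : G ⧸ K))⁻¹ * g ∈ K := by
    rw [← QuotientGroup.eq]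
    simp [QuotientGroup.out_eq']
  have : g = Quotient.out (QuotientGroup.mk g : G ⧸ K) *
      ((Quotient.out (QuotientGroup.mk g : G ⧸ K))⁻¹ * g) := by group
  rw [this]
  exact mul_mem ht (hKle hk)


private noncomputable def auxLift : FreeGroup (Fin 1) →* Multiplicative ℤ :=
  FreeGroup.lift (fun _ => Multiplicative.ofAdd (1 : ℤ))

private lemma auxLift_inj : Function.Injective auxLift := by
  have key : ∀ g : FreeGroup (Fin 1),
      FreeGroup.of (0 : Fin 1) ^ (Multiplicative.toAdd (auxLift g)) = g := by
    intro g
    refine FreeGroup.induction_on g (by simp) ?_ ?_ ?_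
    · intro x
      have : x = 0 := Subsingleton.elim _ _
      subst this
      show FreeGroup.of (0 : Fin 1) ^ (Multiplicative.toAdd (auxLift (FreeGroup.of 0))) = _
      simp [auxLift]
    · intro x hx
      rw [map_inv, toAdd_inv, zpow_neg, hx]
    · intro x y hx hy
      rw [map_mul, toAdd_mul, zpow_add, hx, hy]
  intro a b hab
  rw [← key a, ← key b, hab]

private def auxProdEquiv : Multiplicative ℤ × Multiplicative ℤ ≃* Multiplicative (ℤ × ℤ) where
  toFun p := Multiplicative.ofAdd (Multiplicative.toAdd p.1, Multiplicative.toAdd p.2)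
  invFun p := (Multiplicative.ofAdd (Multiplicative.toAdd p).1,
    Multiplicative.ofAdd (Multiplicative.toAdd p).2)
  left_inv p := rfl
  right_inv p := rfl
  map_mul' p q := rfl

private lemma aux_zpow_ne_one {G : Type*} [Group G]
    (htf : ∀ g : G, g ≠ 1 → ∀ k : ℕ, 0 < k → g ^ k ≠ 1)
    (g : G) (hg : g ≠ 1) (c : ℤ) (hc : c ≠ 0) : g ^ c ≠ 1 := by
  rcases lt_or_gt_of_ne hc with hneg | hpos
  · intro hone
    have : g ^ (-c).toNat ≠ 1 := htf g hg _ (by omega)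
    rw [← zpow_natCast, Int.toNat_of_nonneg (by omega)] at this
    rw [← inv_inv (g ^ c), ← zpow_neg] at hone
    exact this (inv_eq_one.mp hone)
  · intro hone
    have : g ^ c.toNat ≠ 1 := htf g hg _ (by omega)
    rw [← zpow_natCast, Int.toNat_of_nonneg (by omega)] at this
    exact this hone

-- AddEquivs for small Fin pi types
private def auxFinOne : (Fin 1 → ℤ) ≃+ ℤ where
  toFun f := f 0
  invFun z := fun _ => z
  left_inv f := funext fun i => by rw [Subsingleton.elim i 0]
  right_inv z := rfl
  map_add' f g := rfl

private def auxFinTwo : (Fin 2 → ℤ) ≃+ ℤ × ℤ where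
  toFun f := (f 0, f 1)
  invFun p := ![p.1, p.2]
  left_inv f := funext fun i => by fin_cases i <;> rfl
  right_inv p := rfl
  map_add' f g := rfl

/-- if `G` acts geometrically on `X`, `h ∈ G` has infinite order with
centraliser containing a finite-index subgroup isomorphic to `Fₙ × ℤ` whose `ℤ`
factor is commensurable with `⟨h⟩`, `G` is torsion-free and every element of `G`
is virtually central, then `G ≅ ℤ` or `G ≅ ℤ²`. -/
theorem virtually_central_systolic_classification
    {G X : Type*} [Group G] [MetricSpace X] [MulAction G X]
    (hiso : ∀ (g : G) (x y : X), dist (g • x) (g • y) = dist x y)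
    (hproper : ∀ (x : X) (r : ℝ), {g : G | dist x (g • x) ≤ r}.Finite)
    (hcocompact : ∃ (O : X) (R : ℝ), 0 < R ∧ ∀ x : X, ∃ g : G, dist x (g • O) ≤ R)
    (h : G) (hinf : ∀ n : ℕ, 0 < n → h ^ n ≠ 1)
    (n : ℕ) (K : Subgroup G) (hKle : K ≤ Subgroup.centralizer {h})
    (hKfi : (K.subgroupOf (Subgroup.centralizer {h})).FiniteIndex)
    (φ : K ≃* FreeGroup (Fin n) × Multiplicative ℤ)
    (hcomm : Subgroup.Commensurable (Subgroup.zpowers h)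
      (Subgroup.map K.subtype (Subgroup.map φ.symm.toMonoidHom
        ((⊥ : Subgroup (FreeGroup (Fin n))).prod (⊤ : Subgroup (Multiplicative ℤ))))))
    (htf : ∀ g : G, g ≠ 1 → ∀ k : ℕ, 0 < k → g ^ k ≠ 1)
    (hvc : ∀ g : G, (Subgroup.centralizer {g} : Subgroup G).FiniteIndex) :
    Nonempty (G ≃* Multiplicative ℤ) ∨ Nonempty (G ≃* Multiplicative (ℤ × ℤ)) := by
  classical
  have hne : h ≠ 1 := by simpa using hinf 1 one_pos
  -- K has finite index in G
  haveI hCfi : (Subgroup.centralizer ({h} : Set G)).FiniteIndex := hvc h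
  haveI hKfiG : K.FiniteIndex := by
    refine ⟨?_⟩
    rw [← Subgroup.relIndex_mul_index hKle]
    exact mul_ne_zero hKfi.index_ne_zero hCfi.index_ne_zero
  -- K is finitely generated
  haveI hKfg : Group.FG K := by
    have hFG : Group.FG (FreeGroup (Fin n) × Multiplicative ℤ) := by
      refine Group.fg_iff.mpr ⟨(insert 1 (Set.range (FreeGroup.of : Fin n → _))) ×ˢ
        (insert 1 {Multiplicative.ofAdd (1 : ℤ)}), ?_, ?_⟩
      · rw [Subgroup.closure_prod (Set.mem_insert _ _) (Set.mem_insert _ _)]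
        have h1 : Subgroup.closure (insert 1 (Set.range (FreeGroup.of : Fin n → _))) = ⊤ := by
          rw [eq_top_iff]
          intro g _
          refine FreeGroup.induction_on g (one_mem _) ?_ (fun x hx => inv_mem hx)
            (fun x y hx hy => mul_mem hx hy)
          intro x
          exact Subgroup.subset_closure (Set.mem_insert_iff.mpr (Or.inr ⟨x, rfl⟩))
        have h2 : Subgroup.closure (insert 1 {Multiplicative.ofAdd (1 : ℤ)}) = ⊤ := by
          rw [eq_top_iff]
          intro z _
          have hz : Multiplicative.ofAdd (1 : ℤ) ^ (Multiplicative.toAdd z) = z := by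
            rw [← ofAdd_zsmul]
            simp
          rw [← hz]
          have hmem : Multiplicative.ofAdd (1 : ℤ) ∈
              Subgroup.closure (insert 1 {Multiplicative.ofAdd (1 : ℤ)}) :=
            Subgroup.subset_closure (by simp)
          exact zpow_mem hmem _
        rw [h1, h2, Subgroup.top_prod_top]
      · exact Set.Finite.prod ((Set.finite_range _).insert 1) ((Set.finite_singleton _).insert 1)
    exact Group.fg_of_surjective (f := φ.symm.toMonoidHom) (MulEquiv.surjective _)
  haveI hGfg : Group.FG G := aux_fg_of_finiteIndex K hKfg
  -- the center of G has finite index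
  haveI hZfi : (Subgroup.center G).FiniteIndex := by
    obtain ⟨S, hScl, hSfin⟩ := Group.fg_iff.mp hGfg
    haveI : Finite S := hSfin
    haveI : (⨅ s : S, Subgroup.centralizer {(s : G)}).FiniteIndex :=
      Subgroup.finiteIndex_iInf fun s => hvc s
    refine Subgroup.finiteIndex_of_le (H := ⨅ s : S, Subgroup.centralizer {(s : G)}) ?_
    intro g hg
    rw [Subgroup.mem_iInf] at hg
    rw [Subgroup.mem_center_iff]
    intro x
    have hx : x ∈ Subgroup.closure S := hScl ▸ Subgroup.mem_top x
    have hle : Subgroup.closure S ≤ Subgroup.centralizer {g} := by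
      rw [Subgroup.closure_le]
      intro s hs
      have := hg ⟨s, hs⟩
      rw [SetLike.mem_coe]
      rw [Subgroup.mem_centralizer_iff] at this ⊢
      intro y hy
      rw [Set.mem_singleton_iff] at hy; subst hy
      exact (this s (Set.mem_singleton s)).symm
    have := hle hx
    rw [Subgroup.mem_centralizer_iff] at this
    exact (this g (Set.mem_singleton g)).symm
  -- G is abelian
  haveI : Finite (commutatorSet G) := aux_finite_commutatorSet
  haveI : Finite (commutator G) := inferInstance
  have hcm : ∀ a b : G, a * b = b * a := by
    intro a b
    rw [← commutatorElement_eq_one_iff_mul_comm]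
    have hmem : ⁅a, b⁆ ∈ commutator G :=
      Subgroup.commutator_mem_commutator (Subgroup.mem_top a) (Subgroup.mem_top b)
    by_contra hab
    have hpos : 0 < orderOf (⟨⁅a, b⁆, hmem⟩ : commutator G) := orderOf_pos _
    have hone : (⟨⁅a, b⁆, hmem⟩ : commutator G) ^ orderOf (⟨⁅a, b⁆, hmem⟩ : commutator G) = 1 :=
      pow_orderOf_eq_one _
    have : (⁅a, b⁆ : G) ^ orderOf (⟨⁅a, b⁆, hmem⟩ : commutator G) = 1 := by
      have := congrArg (Subtype.val) hone
      rwa [SubgroupClass.coe_pow] at this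
    exact htf _ hab _ hpos this
  letI cg : CommGroup G := { ‹Group G› with mul_comm := hcm }
  -- the free factor is abelian, hence n ≤ 1
  have hn2 : n ≤ 1 := by
    by_contra hn
    push_neg at hn
    have hFcomm : ∀ x y : FreeGroup (Fin n), x * y = y * x := by
      intro x y
      have h1 : φ.symm (x, 1) * φ.symm (y, 1) = φ.symm (y, 1) * φ.symm (x, 1) := by
        have h2 := hcm (φ.symm (x, 1) : G) (φ.symm (y, 1) : G)
        exact Subtype.ext (by exact_mod_cast h2)
      have h3 := congrArg φ h1
      rw [map_mul, map_mul, MulEquiv.apply_symm_apply, MulEquiv.apply_symm_apply] at h3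
      have h4 := congrArg Prod.fst h3
      simpa using h4
    set i0 : Fin n := ⟨0, by omega⟩ with hi0
    set i1 : Fin n := ⟨1, by omega⟩ with hi1
    have hxy := hFcomm (FreeGroup.of i0) (FreeGroup.of i1)
    classical
    let σ : Fin n → Equiv.Perm ℤ := fun i => if i = i0 then Equiv.addRight (1 : ℤ) else Equiv.neg ℤ
    have happ := congrArg (fun w => (FreeGroup.lift σ w : Equiv.Perm ℤ) 0) hxy
    have hσ0 : σ i0 = Equiv.addRight 1 := if_pos rfl
    have hσ1 : σ i1 = Equiv.neg ℤ := if_neg (by simp [hi0, hi1, Fin.ext_iff])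
    simp only [map_mul, FreeGroup.lift_apply_of, Equiv.Perm.mul_apply, hσ0, hσ1] at happ
    simp [Equiv.addRight, Equiv.neg] at happ
  -- the power map lands in K
  haveI hKnorm : K.Normal := ⟨fun a ha g => by
    have hx : g * a * g⁻¹ = a := by rw [hcm g a]; group
    rw [hx]; exact ha⟩
  set m := K.index with hmdef
  have hmpos : 0 < m := Nat.pos_of_ne_zero hKfiG.index_ne_zero
  let ψ : G →* K :=
    { toFun := fun g => ⟨g ^ m, K.pow_index_mem g⟩
      map_one' := by ext; simp
      map_mul' := fun a b => by ext; exact Commute.mul_pow (hcm a b) m }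
  have hψinj : Function.Injective ψ := by
    intro a b hab
    have h1 : a ^ m = b ^ m := congrArg Subtype.val hab
    by_contra hne2
    have h2 : a * b⁻¹ ≠ 1 := by
      intro h3
      exact hne2 (by rwa [mul_inv_eq_one] at h3)
    refine htf (a * b⁻¹) h2 m hmpos ?_
    rw [Commute.mul_pow (hcm a b⁻¹), inv_pow, h1, mul_inv_cancel]
  -- an injective homomorphism from the free factor to ℤ
  obtain ⟨e, he⟩ : ∃ e : FreeGroup (Fin n) →* Multiplicative ℤ, Function.Injective e := by
    match n, hn2 with
    | 0, _ => exact ⟨1, fun a b hab => Subsingleton.elim a b⟩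
    | 1, _ => exact ⟨auxLift, auxLift_inj⟩
  -- an injective homomorphism from G to ℤ × ℤ
  let Φ : G →* Multiplicative (ℤ × ℤ) :=
    auxProdEquiv.toMonoidHom.comp ((MonoidHom.prodMap e (MonoidHom.id (Multiplicative ℤ))).comp
      (φ.toMonoidHom.comp ψ))
  have hΦinj : Function.Injective Φ := by
    intro a b hab
    apply hψinj
    apply φ.injective
    have h2 : (MonoidHom.prodMap e (MonoidHom.id (Multiplicative ℤ))) (φ (ψ a)) =
        (MonoidHom.prodMap e (MonoidHom.id (Multiplicative ℤ))) (φ (ψ b)) :=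
      auxProdEquiv.injective hab
    have h3 : e (φ (ψ a)).1 = e (φ (ψ b)).1 := congrArg Prod.fst h2
    have h4 := congrArg Prod.snd h2
    exact Prod.ext (he h3) h4
  -- pass to the additive world
  let f : Additive G →+ ℤ × ℤ := MonoidHom.toAdditiveLeft Φ
  have hfinj : Function.Injective f := fun a b hab => hΦinj hab
  let L : Additive G →ₗ[ℤ] ℤ × ℤ := f.toIntLinearMap
  have hLinj : Function.Injective L := hfinj
  haveI : Module.Finite ℤ (Additive G) := Module.Finite.iff_addGroup_fg.mpr inferInstance
  haveI : NoZeroSMulDivisors ℤ (Additive G) := by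
    constructor
    intro c x hcx
    by_contra hc
    push_neg at hc
    refine aux_zpow_ne_one htf (Additive.toMul x) ?_ c hc.1 ?_
    · intro hx1
      exact hc.2 (by exact_mod_cast hx1)
    · exact_mod_cast hcx
  haveI : Module.Free ℤ (Additive G) := Module.free_of_finite_type_torsion_free'
  haveI : Nontrivial (Additive G) := by
    refine ⟨⟨Additive.ofMul h, 0, fun hx => hne ?_⟩⟩
    exact_mod_cast hx
  have hr2 : Module.finrank ℤ (Additive G) ≤ 2 := by
    have h1 := LinearMap.finrank_le_finrank_of_injective hLinj
    simpa [Module.finrank_prod, Module.finrank_self] using h1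
  have hr1 : 0 < Module.finrank ℤ (Additive G) := Module.finrank_pos_iff.mpr ‹_›
  have hr : Module.finrank ℤ (Additive G) = 1 ∨ Module.finrank ℤ (Additive G) = 2 := by omega
  rcases hr with hr | hr
  · left
    have b := Module.finBasisOfFinrankEq ℤ (Additive G) hr
    exact ⟨AddEquiv.toMultiplicativeRight (b.equivFun.toAddEquiv.trans auxFinOne)⟩
  · right
    have b := Module.finBasisOfFinrankEq ℤ (Additive G) hr
    exact ⟨AddEquiv.toMultiplicativeRight (b.equivFun.toAddEquiv.trans auxFinTwo)⟩
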